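/- Let G be a finite simple graph in which every vertex has positive degree, and let the marked set M be a clique of size k ≥ 3 (every two distinct vertices of M are adjacent in G). Then for every real a there exists a state ψ : Dart(G) → ℂ such that: ψ(e) = a for every dart e that is not between two vertices of M (in particular on all darts at unmarked vertices and on all darts from marked vertices leaving the clique); ψ(e) = ψ(e.symm) for every dart e; and ψ is fixed by one step of the search algorithm, (S∘C∘Q)ψ = ψ. -/
import Mathlib


namespace GraphWalk

variable {V : Type*}

/-- The flip-flop shift operator `S` on the darts of a simple graph:
`(Sψ)(e) = ψ(e.symm)`. -/
noncomputable def shift (G : SimpleGraph V) (ψ : G.Dart → ℂ) : G.Dart → ℂ :=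
  fun e => ψ e.symm

/-- The Grover coin `C`:
`(Cψ)(e) = (2/deg(e.fst)) Σ_{e' : e'.fst = e.fst} ψ(e') − ψ(e)`. -/
noncomputable def coin [Fintype V] [DecidableEq V] (G : SimpleGraph V)
    [DecidableRel G.Adj] (ψ : G.Dart → ℂ) : G.Dart → ℂ :=
  fun e => (2 / (G.degree e.fst : ℂ)) *
      (∑ e' ∈ Finset.univ.filter (fun e' : G.Dart => e'.fst = e.fst), ψ e') - ψ e

/-- The query `Q`, flipping the sign of all amplitudes at marked vertices. -/
noncomputable def query [DecidableEq V] (G : SimpleGraph V) (M : Finset V)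
    (ψ : G.Dart → ℂ) : G.Dart → ℂ :=
  fun e => if e.fst ∈ M then -ψ e else ψ e

/-- One step of the search algorithm, `U' = S ∘ C ∘ Q`. -/
noncomputable def step [Fintype V] [DecidableEq V] (G : SimpleGraph V)
    [DecidableRel G.Adj] (M : Finset V) (ψ : G.Dart → ℂ) : G.Dart → ℂ :=
  shift G (coin G (query G M ψ))

/-- One step of the quantum walk without query, `U = S ∘ C`. -/
noncomputable def walk [Fintype V] [DecidableEq V] (G : SimpleGraph V)
    [DecidableRel G.Adj] (ψ : G.Dart → ℂ) : G.Dart → ℂ :=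
  shift G (coin G ψ)

end GraphWalk

open Finset

/-- Auxiliary: sum over the darts with a given source, for a function of endpoints. -/
theorem dart_fiber_sum' {V : Type*} [Fintype V] [DecidableEq V]
    (G : SimpleGraph V) [DecidableRel G.Adj] (v : V) (F : V → V → ℂ) :
    ∑ e ∈ Finset.univ.filter (fun e : G.Dart => e.fst = v), F e.fst e.snd
      = ∑ w ∈ G.neighborFinset v, F v w := by
  have h := SimpleGraph.dart_fst_fiber G v
  rw [show (Finset.univ.filter (fun e : G.Dart => e.fst = v))
        = ({d : G.Dart | d.fst = v} : Finset _) from rfl, h,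
    Finset.sum_image (fun x _ y _ hxy => G.dartOfNeighborSet_injective v hxy)]
  rw [show (G.neighborFinset v) = (G.neighborSet v).toFinset from rfl,
    ← Finset.sum_set_coe]
  rfl

/-- Auxiliary: a symmetric off-diagonal assignment on a clique with prescribed row sums. -/
theorem clique_rowsum' {ι : Type*} [DecidableEq ι] (M : Finset ι) (u : ι) (hu : u ∈ M)
    (c : ι → ℂ) (hk1 : ((M.card : ℂ) - 1) ≠ 0) (hk2 : ((M.card : ℂ) - 2) ≠ 0) :
    ∑ w ∈ M.erase u, ((c u + c w) / ((M.card : ℂ) - 2)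
        - (∑ v ∈ M, c v) / (((M.card : ℂ) - 1) * ((M.card : ℂ) - 2))) = c u := by
  have h1 : ∑ w ∈ M.erase u, c w = (∑ v ∈ M, c v) - c u := Finset.sum_erase_eq_sub hu
  have hc1 : 1 ≤ M.card := Finset.card_pos.mpr ⟨u, hu⟩
  have hcardE : (((M.erase u).card : ℕ) : ℂ) = (M.card : ℂ) - 1 := by
    rw [Finset.card_erase_of_mem hu]
    push_cast [Nat.cast_sub hc1]
    ring
  rw [Finset.sum_sub_distrib, Finset.sum_const, ← Finset.sum_div,
    Finset.sum_add_distrib, Finset.sum_const, h1, nsmul_eq_mul, nsmul_eq_mul, hcardE]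
  field_simp
  ring

/-- If the marked set `M` of a finite simple graph (every vertex of positive degree) is
a clique of size `k ≥ 3`, then for every real `a` there is a state `ψ` which equals `a`
on every dart not joining two vertices of `M`, is symmetric along every edge, and is
fixed by one step of the search algorithm `S ∘ C ∘ Q`: a marked `k`-clique is an
exceptional configuration. -/
theorem marked_clique_stationary_exists {V : Type*} [Fintype V] [DecidableEq V]
    (G : SimpleGraph V) [DecidableRel G.Adj] (hdeg : ∀ v : V, 0 < G.degree v)
    (M : Finset V) (hcard : 3 ≤ M.card)
    (hclique : ∀ u ∈ M, ∀ v ∈ M, u ≠ v → G.Adj u v) :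
    ∀ a : ℝ, ∃ ψ : G.Dart → ℂ,
      (∀ e : G.Dart, ¬(e.fst ∈ M ∧ e.snd ∈ M) → ψ e = (a : ℂ)) ∧
      (∀ e : G.Dart, ψ e = ψ e.symm) ∧
      GraphWalk.step G M ψ = ψ := by
  intro a
  have hk1 : ((M.card : ℂ) - 1) ≠ 0 := by
    intro h; rw [sub_eq_zero] at h
    have : M.card = 1 := by exact_mod_cast h
    omega
  have hk2 : ((M.card : ℂ) - 2) ≠ 0 := by
    intro h; rw [sub_eq_zero] at h
    have : M.card = 2 := by exact_mod_cast h
    omega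
  set c : V → ℂ := fun v => -(((G.degree v : ℂ) - (M.card : ℂ) + 1) * (a : ℂ)) with hc
  set B : V → V → ℂ := fun u w =>
    (c u + c w) / ((M.card : ℂ) - 2)
      - (∑ v ∈ M, c v) / (((M.card : ℂ) - 1) * ((M.card : ℂ) - 2)) with hB
  set F : V → V → ℂ := fun u w => if u ∈ M ∧ w ∈ M then B u w else (a : ℂ) with hF
  set ψ : G.Dart → ℂ := fun e => F e.fst e.snd with hψ
  -- the neighborhood of a marked vertex inside M
  have hNM : ∀ u ∈ M, (G.neighborFinset u).filter (· ∈ M) = M.erase u := by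
    intro u hu
    ext w
    simp only [Finset.mem_filter, SimpleGraph.mem_neighborFinset, Finset.mem_erase]
    constructor
    · rintro ⟨hadj, hwM⟩; exact ⟨hadj.ne', hwM⟩
    · rintro ⟨hne, hwM⟩; exact ⟨hclique u hu w hwM (Ne.symm hne), hwM⟩
  have hsub : ∀ u ∈ M, M.erase u ⊆ G.neighborFinset u := by
    intro u hu w hw
    rw [SimpleGraph.mem_neighborFinset]
    exact hclique u hu w (Finset.mem_of_mem_erase hw) (Ne.symm (Finset.ne_of_mem_erase hw))
  have hdle : ∀ u ∈ M, M.card - 1 ≤ G.degree u := by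
    intro u hu
    have := Finset.card_le_card (hsub u hu)
    rwa [Finset.card_erase_of_mem hu, SimpleGraph.card_neighborFinset_eq_degree] at this
  -- sum of B over the other clique vertices
  have hBsum : ∀ u ∈ M, ∑ w ∈ M.erase u, B u w = c u := by
    intro u hu
    exact clique_rowsum' M u hu c hk1 hk2
  -- sum of ψ over the darts at a marked vertex is zero
  have hzero : ∀ u ∈ M, ∑ e ∈ Finset.univ.filter (fun e : G.Dart => e.fst = u), ψ e = 0 := by
    intro u hu
    rw [hψ]
    rw [show (∑ e ∈ Finset.univ.filter (fun e : G.Dart => e.fst = u), F e.fst e.snd)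
        = ∑ w ∈ G.neighborFinset u, F u w from dart_fiber_sum' G u F]
    have hFu : ∀ w, F u w = if w ∈ M then B u w else (a : ℂ) := by
      intro w; rw [hF]; by_cases hw : w ∈ M <;> simp [hu, hw]
    simp only [hFu]
    rw [Finset.sum_ite, hNM u hu, hBsum u hu, Finset.sum_const, nsmul_eq_mul]
    have hcardf : (((G.neighborFinset u).filter (fun w => ¬ w ∈ M)).card : ℂ)
        = (G.degree u : ℂ) - ((M.card : ℂ) - 1) := by
      have hsplit : ((G.neighborFinset u).filter (· ∈ M)).card
          + ((G.neighborFinset u).filter (fun w => ¬ w ∈ M)).card = G.degree u := by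
        rw [Finset.card_filter_add_card_filter_not,
          SimpleGraph.card_neighborFinset_eq_degree]
      have h2 : ((G.neighborFinset u).filter (· ∈ M)).card = M.card - 1 := by
        rw [hNM u hu, Finset.card_erase_of_mem hu]
      have h3 : ((G.neighborFinset u).filter (fun w => ¬ w ∈ M)).card
          = G.degree u - (M.card - 1) := by omega
      rw [h3]
      push_cast [Nat.cast_sub (hdle u hu), Nat.cast_sub (by omega : 1 ≤ M.card)]
      ring
    rw [hcardf, hc]
    ring
  -- symmetry of ψ
  have hsymm : ∀ e : G.Dart, ψ e = ψ e.symm := by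
    intro e
    rw [hψ]
    show F e.fst e.snd = F e.symm.fst e.symm.snd
    have h1 : e.symm.fst = e.snd := rfl
    have h2 : e.symm.snd = e.fst := rfl
    rw [h1, h2, hF]
    by_cases h : e.fst ∈ M ∧ e.snd ∈ M
    · simp only [h.1, h.2, and_self, if_true, hB]; ring
    · have h' : ¬ (e.snd ∈ M ∧ e.fst ∈ M) := fun hh => h ⟨hh.2, hh.1⟩
      simp [h, h']
  refine ⟨ψ, ?_, hsymm, ?_⟩
  · intro e he
    rw [hψ]; show F e.fst e.snd = (a : ℂ)
    rw [hF]; simp [he]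
  · funext e
    show GraphWalk.coin G (GraphWalk.query G M ψ) e.symm = ψ e
    unfold GraphWalk.coin GraphWalk.query
    by_cases hm : e.symm.fst ∈ M
    · -- the fiber sum of the queried state at a marked vertex vanishes
      have hsum0 : ∑ e' ∈ Finset.univ.filter (fun e' : G.Dart => e'.fst = e.symm.fst),
          (if e'.fst ∈ M then -ψ e' else ψ e') = 0 := by
        rw [Finset.sum_congr rfl (fun e' he' => ?_), Finset.sum_neg_distrib,
          hzero _ hm, neg_zero]
        have h1 : e'.fst = e.symm.fst := by
          simpa using (Finset.mem_filter.mp he').2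
        rw [h1, if_pos hm]
      rw [hsum0, mul_zero, if_pos hm, zero_sub, neg_neg]
      exact (hsymm e).symm
    · have hval : ∀ e' : G.Dart, e'.fst ∉ M → ψ e' = (a : ℂ) := by
        intro e' h
        rw [hψ]; show F e'.fst e'.snd = (a : ℂ)
        rw [hF]; simp [h]
      have hsuma : ∑ e' ∈ Finset.univ.filter (fun e' : G.Dart => e'.fst = e.symm.fst),
          (if e'.fst ∈ M then -ψ e' else ψ e') = (G.degree e.symm.fst : ℂ) * (a : ℂ) := by
        rw [Finset.sum_congr rfl (fun e' he' => ?_), Finset.sum_const, nsmul_eq_mul,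
          SimpleGraph.dart_fst_fiber_card_eq_degree]
        have h1 : e'.fst = e.symm.fst := by
          simpa using (Finset.mem_filter.mp he').2
        rw [h1, if_neg hm]
        exact hval e' (h1 ▸ hm)
      have hd : (G.degree e.symm.fst : ℂ) ≠ 0 := Nat.cast_ne_zero.mpr (hdeg e.symm.fst).ne'
      rw [hsuma, if_neg hm]
      have hea : ψ e = (a : ℂ) := by
        rw [hψ]; show F e.fst e.snd = (a : ℂ)
        rw [hF]
        have : e.snd ∉ M := hm
        simp [this]
      rw [hea, show ψ e.symm = (a : ℂ) from hval e.symm hm]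
      have hd' : (G.degree e.snd : ℂ) ≠ 0 := hd
      field_simp
      ring
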